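/- Let n ≥ 1 and let S : Ω → (Fin (n+1) → ℝ) be a random vector on a probability space (Ω, 𝔽, ℙ) whose law is exchangeable: for every permutation σ of Fin (n+1), the law of (S_{σ(0)}, ..., S_{σ(n)}) equals the law of (S_0, ..., S_n). Suppose moreover that almost surely the coordinates S_0(ω), ..., S_n(ω) are pairwise distinct. Then for every j ∈ {0, 1, ..., n}, the probability that exactly j of the first n coordinates are strictly less than the last coordinate equals 1/(n+1); i.e., ℙ( #{ i ∈ {0,...,n−1} : S_i < S_n } = j ) = 1/(n+1). -/

import Mathlib

open MeasureTheory Finset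

/-- **Uniform distribution of the rank of the last coordinate.** If the law of the
random vector `(S 0, …, S n)` is exchangeable and the coordinates are almost surely
pairwise distinct, then for every `j ∈ {0, …, n}` the probability that exactly `j`
of the first `n` coordinates lie strictly below the last coordinate is `1/(n+1)`. -/
theorem rank_uniform_of_exchangeable {Ω : Type*} [MeasurableSpace Ω]
    (ℙ : Measure Ω) [IsProbabilityMeasure ℙ]
    (n : ℕ) (hn : 1 ≤ n) (S : Ω → Fin (n + 1) → ℝ) (hS : Measurable S)
    (hexch : ∀ σ : Equiv.Perm (Fin (n + 1)),
      Measure.map (fun ω => fun i => S ω (σ i)) ℙ = Measure.map S ℙ)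
    (hdist : ∀ᵐ ω ∂ℙ, ∀ i j : Fin (n + 1), i ≠ j → S ω i ≠ S ω j)
    (j : ℕ) (hj : j ≤ n) :
    ℙ {ω | (Finset.univ.filter
        (fun i : Fin n => S ω i.castSucc < S ω (Fin.last n))).card = j}
      = 1 / (n + 1) := by
  classical
  set μ := Measure.map S ℙ with hμ
  haveI : IsProbabilityMeasure μ := Measure.isProbabilityMeasure_map hS.aemeasurable
  -- rank function
  set r : (Fin (n + 1) → ℝ) → Fin (n + 1) → ℕ :=
    fun v k => (univ.filter (fun i => v i < v k)).card with hr
  have hr_sum : ∀ v k, r v k = ∑ i, if v i < v k then 1 else 0 := by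
    intro v k; exact Finset.card_filter _ _
  have hr_meas : ∀ k, Measurable fun v => r v k := by
    intro k
    simp only [hr_sum]
    refine Finset.measurable_sum _ (fun i _ => ?_)
    exact Measurable.ite
      (measurableSet_lt (measurable_pi_apply i) (measurable_pi_apply k))
      measurable_const measurable_const
  set A : Fin (n + 1) → Set (Fin (n + 1) → ℝ) := fun k => {v | r v k = j} with hA
  have hA_meas : ∀ k, MeasurableSet (A k) := fun k =>
    (hr_meas k) (measurableSet_singleton j)
  -- distinctness set
  set D : Set (Fin (n + 1) → ℝ) :=
    {v | ∀ i j : Fin (n + 1), i ≠ j → v i ≠ v j} with hD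
  have hD_meas : MeasurableSet D := by
    have : D = ⋂ (i : Fin (n + 1)) (k : Fin (n + 1)) (_ : i ≠ k),
        {v : Fin (n + 1) → ℝ | v i = v k}ᶜ := by
      ext v; simp [hD]
    rw [this]
    refine MeasurableSet.iInter fun i => MeasurableSet.iInter fun k =>
      MeasurableSet.iInter fun _ => ?_
    exact (measurableSet_eq_fun (measurable_pi_apply i) (measurable_pi_apply k)).compl
  have hDc : μ Dᶜ = 0 := by
    rw [hμ, Measure.map_apply hS hD_meas.compl]
    have h : ℙ {ω | ¬ (S ω ∈ D)} = 0 := by rw [← ae_iff]; exact hdist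
    exact h
  have hD_one : μ D = 1 := by
    have h := measure_compl hD_meas (measure_ne_top μ D)
    rw [hDc, measure_univ] at h
    exact le_antisymm prob_le_one (tsub_eq_zero_iff_le.mp h.symm)
  -- permutation invariance of rank counts
  have key : ∀ (v : Fin (n + 1) → ℝ) (σ : Equiv.Perm (Fin (n + 1))) k,
      r (fun i => v (σ i)) k = r v (σ k) := by
    intro v σ k
    rw [hr_sum, hr_sum]
    exact Fintype.sum_equiv σ _ _ (fun i => rfl)
  -- exchangeability gives equal measures
  have hmap : ∀ σ : Equiv.Perm (Fin (n + 1)),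
      Measure.map (fun v : Fin (n + 1) → ℝ => fun i => v (σ i)) μ = μ := by
    intro σ
    have hm : Measurable (fun v : Fin (n + 1) → ℝ => fun i => v (σ i)) :=
      measurable_pi_lambda _ (fun i => measurable_pi_apply (σ i))
    rw [hμ, Measure.map_map hm hS]
    exact hexch σ
  have hAeq : ∀ k : Fin (n + 1), μ (A k) = μ (A (Fin.last n)) := by
    intro k
    set σ := Equiv.swap (Fin.last n) k with hσ
    have hm : Measurable (fun v : Fin (n + 1) → ℝ => fun i => v (σ i)) :=
      measurable_pi_lambda _ (fun i => measurable_pi_apply (σ i))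
    have : μ (A (Fin.last n)) = μ ((fun v : Fin (n + 1) → ℝ => fun i => v (σ i)) ⁻¹' (A (Fin.last n))) := by
      conv_lhs => rw [← hmap σ]
      rw [Measure.map_apply hm (hA_meas _)]
    rw [this]
    congr 1
    ext v
    simp only [Set.mem_preimage, hA, Set.mem_setOf_eq, key v σ (Fin.last n)]
    rw [hσ, Equiv.swap_apply_left]
  -- on D, ranks are injective and bounded, hence bijective
  have hrank_lt : ∀ v k, r v k ≤ n := by
    intro v k
    have : univ.filter (fun i => v i < v k) ⊆ univ.erase k := by
      intro i hi
      simp only [mem_filter] at hi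
      refine mem_erase.2 ⟨?_, mem_univ i⟩
      rintro rfl; exact lt_irrefl _ hi.2
    calc r v k ≤ (univ.erase k).card := Finset.card_le_card this
      _ = n := by simp
  have hinj : ∀ v ∈ D, Function.Injective (fun k => r v k) := by
    intro v hv k k' hkk'
    by_contra hne
    have hvne : v k ≠ v k' := hv k k' hne
    -- wlog v k < v k'
    have mono : ∀ a b : Fin (n + 1), v a < v b → r v a < r v b := by
      intro a b hab
      refine Finset.card_lt_card ?_
      rw [Finset.ssubset_iff_of_subset]
      · exact ⟨a, by simp [hab], by simp⟩
      · intro i hi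
        simp only [mem_filter, mem_univ, true_and] at hi ⊢
        exact hi.trans hab
    rcases lt_or_gt_of_ne hvne with h | h
    · exact absurd hkk' (Nat.ne_of_lt (mono _ _ h))
    · exact absurd hkk' (Nat.ne_of_gt (mono _ _ h))
  have hexists : ∀ v ∈ D, ∃ k, r v k = j := by
    intro v hv
    set f : Fin (n + 1) → Fin (n + 1) := fun k => ⟨r v k, Nat.lt_succ_of_le (hrank_lt v k)⟩ with hf
    have hfinj : Function.Injective f := by
      intro a b hab
      exact hinj v hv (by simpa [hf, Fin.ext_iff] using hab)
    have hfsurj : Function.Surjective f := Finite.surjective_of_injective hfinj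
    obtain ⟨k, hk⟩ := hfsurj ⟨j, Nat.lt_succ_of_le hj⟩
    exact ⟨k, by simpa [hf, Fin.ext_iff] using hk⟩
  -- disjoint cover of D
  have hcover : D ⊆ ⋃ k, A k ∩ D := by
    intro v hv
    obtain ⟨k, hk⟩ := hexists v hv
    exact Set.mem_iUnion.2 ⟨k, hk, hv⟩
  have hdisj : Pairwise (Function.onFun Disjoint fun k => A k ∩ D) := by
    intro k k' hkk'
    simp only [Function.onFun, Set.disjoint_left]
    rintro v ⟨hk, hvD⟩ ⟨hk', _⟩
    refine hkk' (hinj v hvD ?_)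
    simp only [hA, Set.mem_setOf_eq] at hk hk'
    show r v k = r v k'
    rw [hk, hk']
  have hsum : ∑ k : Fin (n + 1), μ (A k ∩ D) = 1 := by
    rw [← tsum_fintype (L := SummationFilter.unconditional _), ← measure_iUnion hdisj (fun k => (hA_meas k).inter hD_meas)]
    refine le_antisymm ?_ ?_
    · exact prob_le_one
    · rw [← hD_one]; exact measure_mono hcover
  have hAD : ∀ k, μ (A k ∩ D) = μ (A k) := by
    intro k
    exact measure_inter_conull hDc
  have hsum' : (n + 1 : ENNReal) * μ (A (Fin.last n)) = 1 := by
    have : ∑ k : Fin (n + 1), μ (A k ∩ D) = (n + 1 : ENNReal) * μ (A (Fin.last n)) := by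
      rw [Finset.sum_congr rfl (fun k _ => by rw [hAD k, hAeq k])]
      simp [Finset.sum_const, mul_comm]
    rw [← this, hsum]
  -- identify the target set
  have htarget : {ω | (Finset.univ.filter
      (fun i : Fin n => S ω i.castSucc < S ω (Fin.last n))).card = j}
      = S ⁻¹' (A (Fin.last n)) := by
    ext ω
    simp only [Set.mem_setOf_eq, Set.mem_preimage, hA, Set.mem_setOf_eq]
    have h : r (S ω) (Fin.last n)
        = (univ.filter (fun i : Fin n => S ω i.castSucc < S ω (Fin.last n))).card := by
      rw [hr_sum, Fin.sum_univ_castSucc, if_neg (lt_irrefl _), add_zero,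
        Finset.card_filter]
    rw [h]
  rw [htarget, ← Measure.map_apply hS (hA_meas _), ← hμ]
  have hne : ((n : ENNReal) + 1) ≠ 0 := by simp
  have hnt : ((n : ENNReal) + 1) ≠ ⊤ := by simp
  rw [ENNReal.eq_div_iff hne hnt]
  exact hsum'
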